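/- arXiv:1812.01086 — 7 statements merged into one kernel-verified Lean document; each statement's English description precedes it below -/
import Mathlib

section
/- Three consecutive normal lines of a parallel pair (X,U) at indices i-1, i, i+1 are concurrent if and only if b(i+1/2) = b(i-1/2), i.e., the intersection points E(i-1/2) = X(i-1) + b(i-1/2)⁻¹ U(i-1) and E(i+1/2) = X(i) + b(i+1/2)⁻¹ U(i) coincide iff b(i-1/2) = b(i+1/2). -/
noncomputable def det3 (a b c : Fin 3 → ℝ) : ℝ := Matrix.det (Matrix.of ![a, b, c])

/-- three consecutive normal lines are concurrent iff b(i-1/2)=b(i+1/2).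
Here `b i`, `E i` stand for the half-integer values `b(i+1/2)`, `E(i+1/2)`. -/
theorem consecutive_normals_concurrent_iff
    (X U : ℤ → Fin 3 → ℝ) (b : ℤ → ℝ)
    (hpar : ∀ i, U (i + 1) - U i = -b i • (X (i + 1) - X i))
    (hb : ∀ i, b i ≠ 0)
    (htrans : ∀ i, 0 < det3 (X i) (X (i + 1)) (U i))
    (i : ℤ) :
    X (i - 1) + (b (i - 1))⁻¹ • U (i - 1) = X i + (b i)⁻¹ • U i ↔
      b (i - 1) = b i := by
  have h := hpar (i - 1)
  rw [sub_add_cancel] at h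
  have hUi : U i ≠ 0 := by
    intro h0
    have ht := htrans i
    rw [h0] at ht
    simp [det3, Matrix.det_fin_three] at ht
  have hU1 : U (i - 1) = U i + b (i - 1) • (X i - X (i - 1)) := by
    have := h
    rw [sub_eq_iff_eq_add] at this
    rw [this, neg_smul]; abel
  have key : X (i - 1) + (b (i - 1))⁻¹ • U (i - 1) = X i + (b (i - 1))⁻¹ • U i := by
    rw [hU1, smul_add, smul_smul, inv_mul_cancel₀ (hb (i - 1)), one_smul]
    abel
  rw [key]
  constructor
  · intro heq
    have h2 : ((b (i - 1))⁻¹ - (b i)⁻¹) • U i = 0 := by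
      rw [sub_smul, sub_eq_zero]
      exact add_left_cancel heq
    rcases smul_eq_zero.mp h2 with h3 | h3
    · exact inv_injective (by linarith [sub_eq_zero.mp h3] : (b (i-1))⁻¹ = (b i)⁻¹)
    · exact absurd h3 hUi
  · intro heq; rw [heq]
end

section
/- A transversal vector field Ū along X is parallel and contained in the plane spanned by X(i) and U(i) for each i if and only if Ū = c·X + d·U for some constants c and d with d ≠ 0. -/
lemma det3_expand (a b u : Fin 3 → ℝ) :
    det3 a b u = a 0 * b 1 * u 2 - a 0 * b 2 * u 1 - a 1 * b 0 * u 2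
      + a 1 * b 2 * u 0 + a 2 * b 0 * u 1 - a 2 * b 1 * u 0 := by
  simp [det3, Matrix.det_fin_three]

lemma det3_comb (a b u : Fin 3 → ℝ) (m n : ℝ) :
    det3 a b (m • a + n • u) = n * det3 a b u := by
  simp only [det3_expand, Pi.add_apply, Pi.smul_apply, smul_eq_mul]; ring

lemma indep3 (a b u : Fin 3 → ℝ) (h : det3 a b u ≠ 0) {α β γ : ℝ}
    (heq : α • a + β • b + γ • u = 0) : α = 0 ∧ β = 0 ∧ γ = 0 := by
  have e : ∀ j, α * a j + β * b j + γ * u j = 0 := fun j => by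
    have := congrFun heq j
    simpa using this
  have h0 := e 0; have h1 := e 1; have h2 := e 2
  rw [det3_expand] at h
  refine ⟨?_, ?_, ?_⟩
  · have : α * (a 0 * b 1 * u 2 - a 0 * b 2 * u 1 - a 1 * b 0 * u 2
      + a 1 * b 2 * u 0 + a 2 * b 0 * u 1 - a 2 * b 1 * u 0) = 0 := by
      linear_combination (b 1 * u 2 - b 2 * u 1) * h0 + (b 2 * u 0 - b 0 * u 2) * h1 + (b 0 * u 1 - b 1 * u 0) * h2
    exact (mul_eq_zero.mp this).resolve_right h
  · have : β * (a 0 * b 1 * u 2 - a 0 * b 2 * u 1 - a 1 * b 0 * u 2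
      + a 1 * b 2 * u 0 + a 2 * b 0 * u 1 - a 2 * b 1 * u 0) = 0 := by
      linear_combination (a 2 * u 1 - a 1 * u 2) * h0 + (a 0 * u 2 - a 2 * u 0) * h1 + (a 1 * u 0 - a 0 * u 1) * h2
    exact (mul_eq_zero.mp this).resolve_right h
  · have : γ * (a 0 * b 1 * u 2 - a 0 * b 2 * u 1 - a 1 * b 0 * u 2
      + a 1 * b 2 * u 0 + a 2 * b 0 * u 1 - a 2 * b 1 * u 0) = 0 := by
      linear_combination (a 1 * b 2 - a 2 * b 1) * h0 + (a 2 * b 0 - a 0 * b 2) * h1 + (a 0 * b 1 - a 1 * b 0) * h2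
    exact (mul_eq_zero.mp this).resolve_right h

/-- a transversal field Ū is parallel and contained in the normal plane
iff Ū = c X + d U for constants c, d with d ≠ 0. -/
theorem parallel_in_normal_plane_iff
    (X U Ub : ℤ → Fin 3 → ℝ) (b : ℤ → ℝ)
    (hconv : ∀ i, 0 < det3 (X (i - 1)) (X i) (X (i + 1)))
    (htrans : ∀ i, 0 < det3 (X i) (X (i + 1)) (U i))
    (hpar : ∀ i, U (i + 1) - U i = -b i • (X (i + 1) - X i))
    (htransUb : ∀ i, 0 < det3 (X i) (X (i + 1)) (Ub i)) :
    ((∀ i, ∃ s : ℝ, Ub (i + 1) - Ub i = s • (X (i + 1) - X i)) ∧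
      ∀ i, Ub i ∈ Submodule.span ℝ ({X i, U i} : Set (Fin 3 → ℝ))) ↔
    ∃ c d : ℝ, d ≠ 0 ∧ ∀ i, Ub i = c • X i + d • U i := by
  constructor
  · rintro ⟨hparUb, hspan⟩
    -- coefficient functions
    have hcoef : ∀ i, ∃ p : ℝ × ℝ, Ub i = p.1 • X i + p.2 • U i := by
      intro i
      obtain ⟨m, n, hmn⟩ := Submodule.mem_span_pair.mp (hspan i)
      exact ⟨(m, n), hmn.symm⟩
    choose p hp using hcoef
    set c : ℤ → ℝ := fun i => (p i).1 with hc
    set d : ℤ → ℝ := fun i => (p i).2 with hd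
    -- d i > 0
    have hdpos : ∀ i, 0 < d i := by
      intro i
      have h1 : det3 (X i) (X (i + 1)) (Ub i) = d i * det3 (X i) (X (i + 1)) (U i) := by
        rw [hp i]; exact det3_comb _ _ _ _ _
      have h2 := htransUb i
      rw [h1] at h2
      nlinarith [htrans i]
    have step : ∀ i, c (i + 1) = c i ∧ d (i + 1) = d i := by
      intro i
      obtain ⟨s, hs⟩ := hparUb i
      have hU := hpar i
      have key : (d (i + 1) * b i - c i + s) • X i
          + (c (i + 1) - d (i + 1) * b i - s) • X (i + 1)
          + (d (i + 1) - d i) • U i = 0 := by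
        have h0 := hp i; have h1 := hp (i + 1)
        linear_combination (norm := module) h0 - h1 + hs - (d (i + 1)) • hU
      obtain ⟨e1, e2, e3⟩ := indep3 _ _ _ (ne_of_gt (htrans i)) key
      constructor
      · linarith
      · linarith
    have hdc : ∀ i, c i = c 0 ∧ d i = d 0 := by
      intro i
      induction i using Int.induction_on with
      | zero => exact ⟨rfl, rfl⟩
      | succ n ih => exact ⟨(step n).1.trans ih.1, (step n).2.trans ih.2⟩
      | pred n ih =>
        have h := step (-(n : ℤ) - 1)
        have harg : (-(n : ℤ) - 1 + 1) = -(n : ℤ) := by ring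
        rw [harg] at h
        exact ⟨h.1.symm.trans ih.1, h.2.symm.trans ih.2⟩
    refine ⟨c 0, d 0, (hdpos 0).ne', fun i => ?_⟩
    rw [hp i, show (p i).1 = c 0 from (hdc i).1, show (p i).2 = d 0 from (hdc i).2]
  · rintro ⟨c, d, hd, hUb⟩
    constructor
    · intro i
      refine ⟨c - d * b i, ?_⟩
      have hU := hpar i
      rw [hUb i, hUb (i + 1)]
      linear_combination (norm := module) d • hU
    · intro i
      rw [hUb i]
      exact Submodule.mem_span_pair.mpr ⟨c, d, rfl⟩
end

section
/- For an equal-volume polygon X, the vector field U(i) = X''(i) + λ(i)X(i) (with λ defined by the osculating-plane condition) is parallel: U(i+1) - U(i) is a scalar multiple of X(i+1) - X(i) for every i. -/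
/-- for an equal-volume polygon, U(i) = X''(i) + λ(i)X(i) is parallel,
where λ' = -τ and τ comes from the structure equations for X'''. -/
theorem equal_volume_U_parallel
    (X : ℤ → Fin 3 → ℝ) (rho1 rho2 tau lam : ℤ → ℝ)
    (hev : ∀ j, det3 (X (j - 1)) (X j) (X (j + 1)) = 1)
    (hstruct2 : ∀ j, (X (j + 2) - 2 • X (j + 1) + X j) - (X (j + 1) - 2 • X j + X (j - 1)) =
        -rho2 j • (X (j + 1) - X j) + tau j • X (j + 1))
    (hstruct1 : ∀ j, (X (j + 2) - 2 • X (j + 1) + X j) - (X (j + 1) - 2 • X j + X (j - 1)) =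
        -rho1 (j + 1) • (X (j + 1) - X j) + tau j • X j)
    (hlam : ∀ j, lam (j + 1) - lam j = -tau j)
    (i : ℤ) :
    ∃ s : ℝ,
      ((X (i + 2) - 2 • X (i + 1) + X i) + lam (i + 1) • X (i + 1)) -
          ((X (i + 1) - 2 • X i + X (i - 1)) + lam i • X i) =
        s • (X (i + 1) - X i) := by
  refine ⟨lam i - rho2 i, ?_⟩
  have h2 := hstruct2 i
  have hl := hlam i
  have hlam' : lam (i + 1) = lam i - tau i := by linarith
  rw [hlam']
  linear_combination (norm := module) h2
end

section
/- Duality is an involution: if (Y,V) is the dual pair of (X,U) (with U parallel and transversal), then (X,U) is the dual pair of (Y,V), i.e., X(i)·Y'(i) = 0, X(i)·V(i-1/2) = 1, X(i)·Y(i-1/2) = 0, and U(i)·Y'(i) = 0, U(i)·Y(i-1/2) = 1, U(i)·V(i-1/2) = 0, where Y'(i) = Y(i+1/2) - Y(i-1/2). -/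
open Matrix

/-- duality is an involution: (X,U) is the dual pair of (Y,V). -/
theorem duality_involution
    (X U Y V : ℤ → Fin 3 → ℝ) (b : ℤ → ℝ)
    (htrans : ∀ j, 0 < det3 (X j) (X (j + 1)) (U j))
    (hpar : ∀ j, U (j + 1) - U j = -b j • (X (j + 1) - X j))
    (hY1 : ∀ j, Y j ⬝ᵥ (X (j + 1) - X j) = 0)
    (hY2 : ∀ j, Y j ⬝ᵥ U j = 1)
    (hY3 : ∀ j, Y j ⬝ᵥ X j = 0)
    (hV1 : ∀ j, V j ⬝ᵥ (X (j + 1) - X j) = 0)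
    (hV2 : ∀ j, V j ⬝ᵥ U j = 0)
    (hV3 : ∀ j, V j ⬝ᵥ X j = 1)
    (i : ℤ) :
    X i ⬝ᵥ (Y i - Y (i - 1)) = 0 ∧ X i ⬝ᵥ V (i - 1) = 1 ∧
      X i ⬝ᵥ Y (i - 1) = 0 ∧
    U i ⬝ᵥ (Y i - Y (i - 1)) = 0 ∧ U i ⬝ᵥ Y (i - 1) = 1 ∧
      U i ⬝ᵥ V (i - 1) = 0 := by
  have e : (i - 1) + 1 = i := by ring
  have hY1' := hY1 (i - 1); have hY3' := hY3 (i - 1); have hY2' := hY2 (i - 1)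
  have hV1' := hV1 (i - 1); have hV3' := hV3 (i - 1); have hV2' := hV2 (i - 1)
  have hpar' := hpar (i - 1)
  rw [e] at hY1' hV1' hpar'
  have hU : U i = U (i - 1) - b (i - 1) • (X i - X (i - 1)) := by
    have := hpar'
    have : U i = -b (i - 1) • (X i - X (i - 1)) + U (i - 1) := by
      rw [← this]; abel
    rw [this]; module
  have hYX : Y (i - 1) ⬝ᵥ X i = 0 := by
    have := hY1'
    rw [dotProduct_sub] at this
    linarith [hY3']
  have hVX : V (i - 1) ⬝ᵥ X i = 1 := by
    have := hV1'
    rw [dotProduct_sub] at this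
    linarith [hV3']
  have hYU : Y (i - 1) ⬝ᵥ U i = 1 := by
    rw [hU, dotProduct_sub, dotProduct_smul, hY1', hY2']
    simp
  have hVU : V (i - 1) ⬝ᵥ U i = 0 := by
    rw [hU, dotProduct_sub, dotProduct_smul, hV1', hV2']
    simp
  refine ⟨?_, ?_, ?_, ?_, ?_, ?_⟩
  · rw [dotProduct_sub, dotProduct_comm, hY3, dotProduct_comm, hYX]; ring
  · rw [dotProduct_comm]; exact hVX
  · rw [dotProduct_comm]; exact hYX
  · rw [dotProduct_sub, dotProduct_comm, hY2, dotProduct_comm, hYU]; ring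
  · rw [dotProduct_comm]; exact hYU
  · rw [dotProduct_comm]; exact hVU
end

section
/- The dual pair satisfies β(Y,V)(i) = α(i)/(β(i-1/2)β(i+1/2)), where β(Y,V)(i) = [Y(i-1/2), Y(i+1/2), V(i+1/2)], α(i) = [X(i-1), X(i), X(i+1)], and β(i+1/2) = [X(i), X(i+1), U(i)]. -/
open Matrix

/-- Cramer-type identity: any four vectors in ℝ³ are linearly dependent. -/
lemma cramer3 (w a b c d : Fin 3 → ℝ) :
    det3 b c d * (w ⬝ᵥ a) - det3 a c d * (w ⬝ᵥ b) + det3 a b d * (w ⬝ᵥ c)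
      - det3 a b c * (w ⬝ᵥ d) = 0 := by
  simp [det3, Matrix.det_fin_three, dotProduct, Fin.sum_univ_three]
  ring

/-- Cyclic invariance of det3. -/
lemma det3_cyclic (a b c : Fin 3 → ℝ) : det3 b c a = det3 a b c := by
  simp [det3, Matrix.det_fin_three]
  ring

/-- Product of two determinants as a Gram-type determinant. -/
lemma det3_mul_det3 (u v w a b c : Fin 3 → ℝ) :
    det3 u v w * det3 a b c =
      det3 ![u ⬝ᵥ a, u ⬝ᵥ b, u ⬝ᵥ c] ![v ⬝ᵥ a, v ⬝ᵥ b, v ⬝ᵥ c]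
        ![w ⬝ᵥ a, w ⬝ᵥ b, w ⬝ᵥ c] := by
  simp [det3, Matrix.det_fin_three, dotProduct, Fin.sum_univ_three]
  ring

/-- β(Y,V)(i) = α(i) / (β(i-1/2) β(i+1/2)). -/
theorem dual_beta_formula
    (X U Y V : ℤ → Fin 3 → ℝ) (b : ℤ → ℝ)
    (hconv : ∀ j, 0 < det3 (X (j - 1)) (X j) (X (j + 1)))
    (htrans : ∀ j, 0 < det3 (X j) (X (j + 1)) (U j))
    (hpar : ∀ j, U (j + 1) - U j = -b j • (X (j + 1) - X j))
    (hY1 : ∀ j, Y j ⬝ᵥ (X (j + 1) - X j) = 0)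
    (hY2 : ∀ j, Y j ⬝ᵥ U j = 1)
    (hY3 : ∀ j, Y j ⬝ᵥ X j = 0)
    (hV1 : ∀ j, V j ⬝ᵥ (X (j + 1) - X j) = 0)
    (hV2 : ∀ j, V j ⬝ᵥ U j = 0)
    (hV3 : ∀ j, V j ⬝ᵥ X j = 1)
    (i : ℤ) :
    det3 (Y (i - 1)) (Y i) (V i) =
      det3 (X (i - 1)) (X i) (X (i + 1)) /
        (det3 (X (i - 1)) (X i) (U (i - 1)) * det3 (X i) (X (i + 1)) (U i)) := by
  have hii : i - 1 + 1 = i := by ring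
  -- dot products of Y (i-1)
  have hYm3 : Y (i - 1) ⬝ᵥ X (i - 1) = 0 := hY3 (i - 1)
  have hYm1 : Y (i - 1) ⬝ᵥ X i = 0 := by
    have h := hY1 (i - 1)
    rw [hii, dotProduct_sub, hYm3, sub_zero] at h
    exact h
  have hYm2 : Y (i - 1) ⬝ᵥ U (i - 1) = 1 := hY2 (i - 1)
  -- dot products of Y i
  have hYi3 : Y i ⬝ᵥ X i = 0 := hY3 i
  have hYi1 : Y i ⬝ᵥ X (i + 1) = 0 := by
    have h := hY1 i
    rw [dotProduct_sub, hYi3, sub_zero] at h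
    exact h
  have hYi2 : Y i ⬝ᵥ U i = 1 := hY2 i
  -- dot products of V i
  have hVi3 : V i ⬝ᵥ X i = 1 := hV3 i
  have hVi1 : V i ⬝ᵥ X (i + 1) = 1 := by
    have h := hV1 i
    rw [dotProduct_sub, hVi3] at h
    linarith
  -- notation
  set α := det3 (X (i - 1)) (X i) (X (i + 1)) with hαdef
  set βm := det3 (X (i - 1)) (X i) (U (i - 1)) with hβmdef
  set βp := det3 (X i) (X (i + 1)) (U i) with hβpdef
  have hα : 0 < α := hconv i
  have hβm : 0 < βm := by have h := htrans (i - 1); rwa [hii] at h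
  have hβp : 0 < βp := htrans i
  -- a' := Y(i-1) ⬝ X(i+1) satisfies βm * a' = α
  have ha : βm * (Y (i - 1) ⬝ᵥ X (i + 1)) = α := by
    have h := cramer3 (Y (i - 1)) (X (i - 1)) (X i) (U (i - 1)) (X (i + 1))
    rw [hYm3, hYm1, hYm2] at h
    rw [hβmdef, hαdef]
    linarith
  -- c' := Y i ⬝ X(i-1) satisfies βp * c' = α
  have hc : βp * (Y i ⬝ᵥ X (i - 1)) = α := by
    have h := cramer3 (Y i) (X i) (X (i + 1)) (U i) (X (i - 1))
    rw [hYi3, hYi1, hYi2] at h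
    have hcyc : det3 (X i) (X (i + 1)) (X (i - 1)) = α := by
      rw [hαdef]
      simp [det3, Matrix.det_fin_three]
      ring
    rw [hcyc] at h
    rw [hβpdef]
    linarith
  -- Gram product identity
  have hprod : det3 (Y (i - 1)) (Y i) (V i) * α =
      (Y (i - 1) ⬝ᵥ X (i + 1)) * (Y i ⬝ᵥ X (i - 1)) := by
    have h := det3_mul_det3 (Y (i - 1)) (Y i) (V i) (X (i - 1)) (X i) (X (i + 1))
    rw [hYm3, hYm1, hYi3, hYi1, hVi3, hVi1] at h
    rw [← hαdef] at h
    rw [h]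
    simp [det3, Matrix.det_fin_three]
  have hkey : det3 (Y (i - 1)) (Y i) (V i) * (βm * βp) * α = α * α := by
    calc det3 (Y (i - 1)) (Y i) (V i) * (βm * βp) * α
        = (det3 (Y (i - 1)) (Y i) (V i) * α) * (βm * βp) := by ring
      _ = ((Y (i - 1) ⬝ᵥ X (i + 1)) * (Y i ⬝ᵥ X (i - 1))) * (βm * βp) := by rw [hprod]
      _ = (βm * (Y (i - 1) ⬝ᵥ X (i + 1))) * (βp * (Y i ⬝ᵥ X (i - 1))) := by ring
      _ = α * α := by rw [ha, hc]
  have hkey2 : det3 (Y (i - 1)) (Y i) (V i) * (βm * βp) = α :=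
    mul_right_cancel₀ (ne_of_gt hα) hkey
  rw [eq_div_iff (by positivity)]
  exact hkey2
end

section
/- The dual polygon satisfies α(Y)(i+1/2) = α(i)α(i+1)/(β(i-1/2)β(i+1/2)β(i+3/2)), where α(Y)(i+1/2) = [Y(i-1/2), Y(i+1/2), Y(i+3/2)]. In particular, Y is locally convex with respect to the origin whenever X is locally convex and U is transversal. -/
open Matrix

noncomputable def cross3 (a b : Fin 3 → ℝ) : Fin 3 → ℝ :=
  ![a 1 * b 2 - a 2 * b 1, a 2 * b 0 - a 0 * b 2, a 0 * b 1 - a 1 * b 0]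

lemma det3_eq (a b c : Fin 3 → ℝ) :
    det3 a b c = a 0 * (b 1 * c 2 - b 2 * c 1) - a 1 * (b 0 * c 2 - b 2 * c 0)
      + a 2 * (b 0 * c 1 - b 1 * c 0) := by
  simp [det3, Matrix.det_fin_three]; ring

lemma dot3_eq (v a : Fin 3 → ℝ) : v ⬝ᵥ a = v 0 * a 0 + v 1 * a 1 + v 2 * a 2 := by
  simp [dotProduct, Fin.sum_univ_three]

lemma cramer3_s13 {a u v : Fin 3 → ℝ} (b : Fin 3 → ℝ)
    (h1 : v ⬝ᵥ a = 0) (h2 : v ⬝ᵥ b = 0) (h3 : v ⬝ᵥ u = 1) :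
    ∀ k, det3 a b u * v k = cross3 a b k := by
  rw [dot3_eq] at h1 h2 h3
  intro k
  fin_cases k <;> simp [det3_eq, cross3]
  · linear_combination (b 1 * u 2 - b 2 * u 1) * h1 - (a 1 * u 2 - a 2 * u 1) * h2
      + (a 1 * b 2 - a 2 * b 1) * h3
  · linear_combination (-(b 0 * u 2 - b 2 * u 0)) * h1 + (a 0 * u 2 - a 2 * u 0) * h2
      + (a 2 * b 0 - a 0 * b 2) * h3
  · linear_combination (b 0 * u 1 - b 1 * u 0) * h1 - (a 0 * u 1 - a 1 * u 0) * h2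
      + (a 0 * b 1 - a 1 * b 0) * h3

lemma det3_cross (a b c d : Fin 3 → ℝ) :
    det3 (cross3 a b) (cross3 b c) (cross3 c d) = det3 a b c * det3 b c d := by
  simp [det3_eq, cross3]; ring

/-- α(Y)(i+1/2) = α(i)α(i+1)/(β(i-1/2)β(i+1/2)β(i+3/2)); in particular
the dual polygon Y is locally convex. -/
theorem dual_alpha_formula
    (X U Y : ℤ → Fin 3 → ℝ) (b : ℤ → ℝ)
    (hconv : ∀ j, 0 < det3 (X (j - 1)) (X j) (X (j + 1)))
    (htrans : ∀ j, 0 < det3 (X j) (X (j + 1)) (U j))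
    (hpar : ∀ j, U (j + 1) - U j = -b j • (X (j + 1) - X j))
    (hY1 : ∀ j, Y j ⬝ᵥ (X (j + 1) - X j) = 0)
    (hY2 : ∀ j, Y j ⬝ᵥ U j = 1)
    (hY3 : ∀ j, Y j ⬝ᵥ X j = 0)
    (i : ℤ) :
    det3 (Y (i - 1)) (Y i) (Y (i + 1)) =
      det3 (X (i - 1)) (X i) (X (i + 1)) * det3 (X i) (X (i + 1)) (X (i + 2)) /
        (det3 (X (i - 1)) (X i) (U (i - 1)) * det3 (X i) (X (i + 1)) (U i) *
          det3 (X (i + 1)) (X (i + 2)) (U (i + 1))) ∧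
    0 < det3 (Y (i - 1)) (Y i) (Y (i + 1)) := by
  -- Y j is orthogonal to X (j+1) as well
  have hY1' : ∀ j, Y j ⬝ᵥ X (j + 1) = 0 := by
    intro j
    have h := hY1 j
    rw [dotProduct_sub] at h
    have h3 := hY3 j
    linarith
  have hsol : ∀ j, ∀ k, det3 (X j) (X (j + 1)) (U j) * Y j k
      = cross3 (X j) (X (j + 1)) k := by
    intro j
    exact cramer3_s13 (X (j + 1)) (hY3 j) (hY1' j) (hY2 j)
  have e1 : i - 1 + 1 = i := by ring
  have e2 : i + 1 + 1 = i + 2 := by ring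
  set βm := det3 (X (i - 1)) (X i) (U (i - 1)) with hβm
  set β0 := det3 (X i) (X (i + 1)) (U i) with hβ0
  set βp := det3 (X (i + 1)) (X (i + 2)) (U (i + 1)) with hβp
  have hβmpos : 0 < βm := by have := htrans (i - 1); rwa [e1] at this
  have hβ0pos : 0 < β0 := htrans i
  have hβppos : 0 < βp := by have := htrans (i + 1); rwa [e2] at this
  have hm : ∀ k, βm * Y (i - 1) k = cross3 (X (i - 1)) (X i) k := by
    intro k; have := hsol (i - 1) k; rwa [e1] at this
  have h0 : ∀ k, β0 * Y i k = cross3 (X i) (X (i + 1)) k := hsol i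
  have hp : ∀ k, βp * Y (i + 1) k = cross3 (X (i + 1)) (X (i + 2)) k := by
    intro k; have := hsol (i + 1) k; rwa [e2] at this
  have key : βm * β0 * βp * det3 (Y (i - 1)) (Y i) (Y (i + 1))
      = det3 (X (i - 1)) (X i) (X (i + 1)) * det3 (X i) (X (i + 1)) (X (i + 2)) := by
    rw [← det3_cross (X (i-1)) (X i) (X (i+1)) (X (i+2))]
    rw [det3_eq (Y (i-1)) (Y i) (Y (i+1)),
        det3_eq (cross3 (X (i-1)) (X i)) (cross3 (X i) (X (i+1))) (cross3 (X (i+1)) (X (i+2)))]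
    rw [← hm 0, ← hm 1, ← hm 2, ← h0 0, ← h0 1, ← h0 2, ← hp 0, ← hp 1, ← hp 2]
    ring
  have hαm := hconv i
  have hαp : 0 < det3 (X i) (X (i + 1)) (X (i + 2)) := by
    have := hconv (i + 1); rwa [show i + 1 - 1 = i by ring, e2] at this
  have hne : βm * β0 * βp ≠ 0 := by positivity
  constructor
  · field_simp
    linarith [key]
  · have : det3 (Y (i - 1)) (Y i) (Y (i + 1)) =
        det3 (X (i - 1)) (X i) (X (i + 1)) * det3 (X i) (X (i + 1)) (X (i + 2))
          / (βm * β0 * βp) := by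
      field_simp; linarith [key]
    rw [this]; positivity
end

section
/- If (Y,V) is the dual of (X,U) and Ū = cX + dU with constants c, d, d ≠ 0, then the dual pair of (X,Ū) is (Ȳ,V̄) with Ȳ = d⁻¹Y and V̄ = -c·d⁻¹·Y + V. -/
open Matrix

/-- the dual of (X, cX+dU) is (d⁻¹ Y, -c d⁻¹ Y + V). -/
theorem dual_of_modified_field
    (X U Y V : ℤ → Fin 3 → ℝ) (b : ℤ → ℝ) (c d : ℝ)
    (htrans : ∀ j, 0 < det3 (X j) (X (j + 1)) (U j))
    (hpar : ∀ j, U (j + 1) - U j = -b j • (X (j + 1) - X j))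
    (hd : d ≠ 0)
    (htransUb : ∀ j, 0 < det3 (X j) (X (j + 1)) (c • X j + d • U j))
    (hY1 : ∀ j, Y j ⬝ᵥ (X (j + 1) - X j) = 0)
    (hY2 : ∀ j, Y j ⬝ᵥ U j = 1)
    (hY3 : ∀ j, Y j ⬝ᵥ X j = 0)
    (hV1 : ∀ j, V j ⬝ᵥ (X (j + 1) - X j) = 0)
    (hV2 : ∀ j, V j ⬝ᵥ U j = 0)
    (hV3 : ∀ j, V j ⬝ᵥ X j = 1)
    (i : ℤ) :
    (d⁻¹ • Y i) ⬝ᵥ (X (i + 1) - X i) = 0 ∧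
    (d⁻¹ • Y i) ⬝ᵥ (c • X i + d • U i) = 1 ∧
    (d⁻¹ • Y i) ⬝ᵥ X i = 0 ∧
    (-(c * d⁻¹) • Y i + V i) ⬝ᵥ (X (i + 1) - X i) = 0 ∧
    (-(c * d⁻¹) • Y i + V i) ⬝ᵥ (c • X i + d • U i) = 0 ∧
    (-(c * d⁻¹) • Y i + V i) ⬝ᵥ X i = 1 := by
  have h1 : Y i ⬝ᵥ (X (i + 1) - X i) = 0 := hY1 i
  have h2 := hY2 i; have h3 := hY3 i
  have h4 : V i ⬝ᵥ (X (i + 1) - X i) = 0 := hV1 i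
  have h5 := hV2 i; have h6 := hV3 i
  refine ⟨?_, ?_, ?_, ?_, ?_, ?_⟩ <;>
    simp only [smul_dotProduct, add_dotProduct, dotProduct_add, dotProduct_smul,
      smul_eq_mul, h1, h2, h3, h4, h5, h6] <;> field_simp <;> ring
end
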